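/- For every R > 0 there exists a constant L > 0 such that for all data vectors φ₁, φ₂ ∈ ℝ^M with ‖φ₁‖ ≤ R and ‖φ₂‖ ≤ R, the Hellinger distance between the two posterior distributions, given in terms of their densities with respect to ρ, satisfies (½ ∫_J ( √( Z(φ₁)⁻¹ · exp(−Φ(p,φ₁)) ) − √( Z(φ₂)⁻¹ · exp(−Φ(p,φ₂)) ) )² dρ(p) )^{1/2} ≤ L · ‖φ₁ − φ₂‖_Ξ. That is, the Bayesian posterior depends Lipschitz continuously on the measured data with respect to the Hellinger metric. -/

import Mathlib

open MeasureTheory Real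

/-- The potential `Φ(p,φ) = ½‖φ − G(p)‖_Ξ² − ½‖φ‖_Ξ²` with `‖v‖_Ξ = ξ^{-1/2}‖v‖`. -/
noncomputable def emgPotential {J : Type*} {M : ℕ} (ξ : ℝ)
    (G : J → EuclideanSpace ℝ (Fin M)) (p : J) (φ : EuclideanSpace ℝ (Fin M)) : ℝ :=
  (1 / 2) * (‖φ - G p‖ ^ 2 / ξ) - (1 / 2) * (‖φ‖ ^ 2 / ξ)

/-- The scaling factor `Z(φ) = ∫_J exp(−Φ(p,φ)) dρ(p)`. -/
noncomputable def emgZ {J : Type*} [MeasurableSpace J] {M : ℕ} (ρ : Measure J) (ξ : ℝ)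
    (G : J → EuclideanSpace ℝ (Fin M)) (φ : EuclideanSpace ℝ (Fin M)) : ℝ :=
  ∫ p, Real.exp (-(emgPotential ξ G p φ)) ∂ρ

lemma aux_exp_lip (K a b : ℝ) (ha : a ≤ K) (hb : b ≤ K) :
    |Real.exp a - Real.exp b| ≤ Real.exp K * |a - b| := by
  have main : ∀ x y : ℝ, y ≤ x → x ≤ K →
      Real.exp x - Real.exp y ≤ Real.exp K * (x - y) := by
    intro x y hyx hxK
    have h1 := Real.add_one_le_exp (y - x)
    have h2 : Real.exp x ≤ Real.exp K := Real.exp_le_exp.2 hxK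
    have h3 : Real.exp (y - x) * Real.exp x = Real.exp y := by
      rw [← Real.exp_add]; ring_nf
    nlinarith [Real.exp_pos x]
  rcases le_total b a with h | h
  · rw [abs_of_nonneg (sub_nonneg.2 (Real.exp_le_exp.2 h)),
      abs_of_nonneg (sub_nonneg.2 h)]
    exact main a b h ha
  · rw [abs_sub_comm, abs_sub_comm a b,
      abs_of_nonneg (sub_nonneg.2 (Real.exp_le_exp.2 h)),
      abs_of_nonneg (sub_nonneg.2 h)]
    exact main b a h hb

lemma aux_sqrt_lip (m u v : ℝ) (hm : 0 < m) (hu : m ≤ u) (hv : m ≤ v) :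
    |Real.sqrt u - Real.sqrt v| ≤ |u - v| / (2 * Real.sqrt m) := by
  have hsu : Real.sqrt m ≤ Real.sqrt u := Real.sqrt_le_sqrt hu
  have hsv : Real.sqrt m ≤ Real.sqrt v := Real.sqrt_le_sqrt hv
  have hm' : 0 < Real.sqrt m := Real.sqrt_pos.2 hm
  have h1 : Real.sqrt u ^ 2 = u := Real.sq_sqrt (hm.le.trans hu)
  have h2 : Real.sqrt v ^ 2 = v := Real.sq_sqrt (hm.le.trans hv)
  rw [le_div_iff₀ (by positivity)]
  calc |Real.sqrt u - Real.sqrt v| * (2 * Real.sqrt m)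
      ≤ |Real.sqrt u - Real.sqrt v| * (Real.sqrt u + Real.sqrt v) :=
        mul_le_mul_of_nonneg_left (by linarith) (abs_nonneg _)
    _ = |Real.sqrt u - Real.sqrt v| * |Real.sqrt u + Real.sqrt v| := by
        rw [abs_of_nonneg (by linarith : (0:ℝ) ≤ Real.sqrt u + Real.sqrt v)]
    _ = |(Real.sqrt u - Real.sqrt v) * (Real.sqrt u + Real.sqrt v)| := (abs_mul _ _).symm
    _ = |u - v| := by
        rw [show (Real.sqrt u - Real.sqrt v) * (Real.sqrt u + Real.sqrt v)
          = Real.sqrt u ^ 2 - Real.sqrt v ^ 2 by ring, h1, h2]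

lemma emgPotential_eq {J : Type*} {M : ℕ} (ξ : ℝ) (hξ : 0 < ξ)
    (G : J → EuclideanSpace ℝ (Fin M)) (p : J) (φ : EuclideanSpace ℝ (Fin M)) :
    emgPotential ξ G p φ = (‖G p‖ ^ 2 - 2 * (inner ℝ φ (G p) : ℝ)) / (2 * ξ) := by
  unfold emgPotential
  rw [norm_sub_sq_real φ (G p)]
  field_simp
  ring

/-- The posterior depends Lipschitz continuously on the data with respect to the
Hellinger metric. -/
theorem posterior_lipschitz_hellinger
    {J : Type*} [MeasurableSpace J] (ρ : Measure J) [IsProbabilityMeasure ρ]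
    (M : ℕ) (hM : 0 < M) (ξ : ℝ) (hξ : 0 < ξ)
    (G : J → EuclideanSpace ℝ (Fin M)) (hGmeas : Measurable G)
    (C : ℝ) (hC : 0 < C) (hGbdd : ∀ p, ‖G p‖ ≤ C) :
    ∀ R > (0 : ℝ), ∃ L > (0 : ℝ), ∀ φ₁ φ₂ : EuclideanSpace ℝ (Fin M),
      ‖φ₁‖ ≤ R → ‖φ₂‖ ≤ R →
      Real.sqrt ((1 / 2) * ∫ p,
          (Real.sqrt ((emgZ ρ ξ G φ₁)⁻¹ * Real.exp (-(emgPotential ξ G p φ₁))) -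
            Real.sqrt ((emgZ ρ ξ G φ₂)⁻¹ * Real.exp (-(emgPotential ξ G p φ₂)))) ^ 2 ∂ρ)
        ≤ L * ((Real.sqrt ξ)⁻¹ * ‖φ₁ - φ₂‖) := by
  intro R hR
  set K : ℝ := (C ^ 2 + 2 * R * C) / (2 * ξ) with hKdef
  have hK : 0 < K := by positivity
  -- bound on the potential
  have potbound : ∀ (φ : EuclideanSpace ℝ (Fin M)), ‖φ‖ ≤ R → ∀ p,
      |emgPotential ξ G p φ| ≤ K := by
    intro φ hφ p
    rw [emgPotential_eq ξ hξ, hKdef, abs_div,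
      abs_of_pos (show (0:ℝ) < 2 * ξ by positivity)]
    gcongr
    have h1 := abs_le.1 (abs_real_inner_le_norm φ (G p))
    have h2 := hGbdd p
    have h3 := norm_nonneg (G p)
    have h4 := norm_nonneg φ
    rw [abs_le]
    constructor <;> nlinarith
  -- measurability of the potential
  have hmeasΦ : ∀ φ : EuclideanSpace ℝ (Fin M),
      Measurable (fun p => emgPotential ξ G p φ) := by
    intro φ
    unfold emgPotential
    have h1 : Measurable fun p => ‖φ - G p‖ :=
      ((continuous_const.sub continuous_id).norm).measurable.comp hGmeas
    exact (((h1.pow_const 2).div_const ξ).const_mul (1/2)).sub measurable_const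
  -- integrability of the densities
  have hint : ∀ φ : EuclideanSpace ℝ (Fin M), ‖φ‖ ≤ R →
      Integrable (fun p => Real.exp (-(emgPotential ξ G p φ))) ρ := by
    intro φ hφ
    refine (integrable_const (Real.exp K)).mono'
      ((hmeasΦ φ).neg.exp.aestronglyMeasurable) ?_
    filter_upwards with p
    rw [Real.norm_eq_abs, abs_of_pos (Real.exp_pos _)]
    exact Real.exp_le_exp.2 (by have := abs_le.1 (potbound φ hφ p); linarith)
  -- bounds on Z
  have hZlb : ∀ φ : EuclideanSpace ℝ (Fin M), ‖φ‖ ≤ R →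
      Real.exp (-K) ≤ emgZ ρ ξ G φ := by
    intro φ hφ
    have h := integral_mono (integrable_const (Real.exp (-K))) (hint φ hφ)
      (fun p => Real.exp_le_exp.2 (by have := abs_le.1 (potbound φ hφ p); linarith))
    simpa [measure_univ, emgZ] using h
  have hZub : ∀ φ : EuclideanSpace ℝ (Fin M), ‖φ‖ ≤ R →
      emgZ ρ ξ G φ ≤ Real.exp K := by
    intro φ hφ
    have h := integral_mono (hint φ hφ) (integrable_const (Real.exp K))
      (fun p => Real.exp_le_exp.2 (by have := abs_le.1 (potbound φ hφ p); linarith))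
    simpa [measure_univ, emgZ] using h
  -- the Lipschitz constant
  refine ⟨Real.exp (5 * K) * C / ξ * Real.sqrt ξ, by positivity, ?_⟩
  intro φ₁ φ₂ hφ₁ hφ₂
  set Z₁ := emgZ ρ ξ G φ₁ with hZ₁def
  set Z₂ := emgZ ρ ξ G φ₂ with hZ₂def
  set B : ℝ := C * ‖φ₁ - φ₂‖ / ξ with hBdef
  have hB : 0 ≤ B := by positivity
  have hZ₁pos : 0 < Z₁ := lt_of_lt_of_le (Real.exp_pos _) (hZlb φ₁ hφ₁)
  have hZ₂pos : 0 < Z₂ := lt_of_lt_of_le (Real.exp_pos _) (hZlb φ₂ hφ₂)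
  have hinv1ub : Z₁⁻¹ ≤ Real.exp K := by
    rw [show Real.exp K = (Real.exp (-K))⁻¹ by rw [Real.exp_neg, inv_inv]]
    exact inv_anti₀ (Real.exp_pos _) (hZlb φ₁ hφ₁)
  have hinv2ub : Z₂⁻¹ ≤ Real.exp K := by
    rw [show Real.exp K = (Real.exp (-K))⁻¹ by rw [Real.exp_neg, inv_inv]]
    exact inv_anti₀ (Real.exp_pos _) (hZlb φ₂ hφ₂)
  have hinv1lb : Real.exp (-K) ≤ Z₁⁻¹ := by
    rw [Real.exp_neg]
    exact inv_anti₀ hZ₁pos (hZub φ₁ hφ₁)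
  have hinv2lb : Real.exp (-K) ≤ Z₂⁻¹ := by
    rw [Real.exp_neg]
    exact inv_anti₀ hZ₂pos (hZub φ₂ hφ₂)
  -- difference of potentials
  have potdiff : ∀ p, |emgPotential ξ G p φ₁ - emgPotential ξ G p φ₂| ≤ B := by
    intro p
    have heq : emgPotential ξ G p φ₁ - emgPotential ξ G p φ₂
        = -(inner ℝ (φ₁ - φ₂) (G p) : ℝ) / ξ := by
      rw [emgPotential_eq ξ hξ, emgPotential_eq ξ hξ, inner_sub_left]
      field_simp
      ring
    rw [heq, hBdef, abs_div, abs_of_pos hξ, abs_neg]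
    gcongr
    refine (abs_real_inner_le_norm _ _).trans ?_
    have := hGbdd p
    nlinarith [norm_nonneg (φ₁ - φ₂)]
  -- difference of normalisation constants
  have hZdiff : |Z₁ - Z₂| ≤ Real.exp K * B := by
    rw [hZ₁def, hZ₂def, emgZ, emgZ, ← integral_sub (hint φ₁ hφ₁) (hint φ₂ hφ₂)]
    have habs : |∫ p, (Real.exp (-(emgPotential ξ G p φ₁))
        - Real.exp (-(emgPotential ξ G p φ₂))) ∂ρ|
        ≤ ∫ p, |Real.exp (-(emgPotential ξ G p φ₁))
        - Real.exp (-(emgPotential ξ G p φ₂))| ∂ρ := by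
      simpa [Real.norm_eq_abs] using norm_integral_le_integral_norm
        (μ := ρ) (fun p => Real.exp (-(emgPotential ξ G p φ₁))
          - Real.exp (-(emgPotential ξ G p φ₂)))
    refine habs.trans ?_
    have h := integral_mono ((hint φ₁ hφ₁).sub (hint φ₂ hφ₂)).abs
      (integrable_const (Real.exp K * B)) (fun p => ?_)
    · simpa [measure_univ] using h
    · refine (aux_exp_lip K _ _ (by have := abs_le.1 (potbound φ₁ hφ₁ p); linarith)
        (by have := abs_le.1 (potbound φ₂ hφ₂ p); linarith)).trans ?_
      gcongr
      calc |-(emgPotential ξ G p φ₁) - -(emgPotential ξ G p φ₂)|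
          = |emgPotential ξ G p φ₁ - emgPotential ξ G p φ₂| := by
            rw [abs_sub_comm]; ring_nf
        _ ≤ B := potdiff p
  -- difference of square roots of inverse normalisations
  have sqrtZdiff : |Real.sqrt Z₁⁻¹ - Real.sqrt Z₂⁻¹| ≤ Real.exp (4 * K) / 2 * B := by
    have h1 := aux_sqrt_lip (Real.exp (-K)) Z₁⁻¹ Z₂⁻¹ (Real.exp_pos _) hinv1lb hinv2lb
    have hsq : Real.sqrt (Real.exp (-K)) = Real.exp (-K / 2) := by
      rw [← Real.exp_half]
    have h2 : |Z₁⁻¹ - Z₂⁻¹| ≤ Real.exp (3 * K) * B := by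
      have heq : Z₁⁻¹ - Z₂⁻¹ = (Z₂ - Z₁) / (Z₁ * Z₂) := by field_simp
      rw [heq, abs_div, abs_of_pos (mul_pos hZ₁pos hZ₂pos), abs_sub_comm]
      rw [div_le_iff₀ (mul_pos hZ₁pos hZ₂pos)]
      have hZZ : Real.exp (-K) * Real.exp (-K) ≤ Z₁ * Z₂ :=
        mul_le_mul (hZlb φ₁ hφ₁) (hZlb φ₂ hφ₂) (Real.exp_pos _).le hZ₁pos.le
      have key : Real.exp K * B ≤ Real.exp (3 * K) * B * (Real.exp (-K) * Real.exp (-K)) := by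
        rw [show Real.exp (3 * K) * B * (Real.exp (-K) * Real.exp (-K))
          = Real.exp (3 * K) * Real.exp (-K) * Real.exp (-K) * B by ring,
          ← Real.exp_add, ← Real.exp_add]
        have : (3 : ℝ) * K + -K + -K = K := by ring
        rw [this]
      refine hZdiff.trans (key.trans ?_)
      gcongr
    rw [hsq] at h1
    refine h1.trans (le_trans ((div_le_div_iff_of_pos_right
      (by positivity : (0:ℝ) < 2 * Real.exp (-K / 2))).2 h2) ?_)
    rw [div_le_iff₀ (by positivity : (0:ℝ) < 2 * Real.exp (-K / 2))]
    have e : Real.exp (4 * K) / 2 * B * (2 * Real.exp (-K / 2))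
        = Real.exp (4 * K + -K / 2) * B := by
      rw [Real.exp_add]; ring
    rw [e]
    gcongr
    linarith
  -- pointwise bound on the difference of the square-root densities
  have pointwise : ∀ p,
      |Real.sqrt (Z₁⁻¹ * Real.exp (-(emgPotential ξ G p φ₁)))
        - Real.sqrt (Z₂⁻¹ * Real.exp (-(emgPotential ξ G p φ₂)))|
      ≤ Real.exp (5 * K) * B := by
    intro p
    rw [Real.sqrt_mul (inv_nonneg.2 hZ₁pos.le), Real.sqrt_mul (inv_nonneg.2 hZ₂pos.le),
      ← Real.exp_half, ← Real.exp_half]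
    have hs1 : Real.sqrt Z₁⁻¹ ≤ Real.exp (K / 2) := by
      rw [show Real.exp (K / 2) = Real.sqrt (Real.exp K) from Real.exp_half K]
      exact Real.sqrt_le_sqrt hinv1ub
    have hs1nn : (0:ℝ) ≤ Real.sqrt Z₁⁻¹ := Real.sqrt_nonneg _
    have hb1 : -(emgPotential ξ G p φ₁) / 2 ≤ K / 2 := by
      have := abs_le.1 (potbound φ₁ hφ₁ p); linarith
    have hb2 : -(emgPotential ξ G p φ₂) / 2 ≤ K / 2 := by
      have := abs_le.1 (potbound φ₂ hφ₂ p); linarith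
    have he2 : Real.exp (-(emgPotential ξ G p φ₂) / 2) ≤ Real.exp (K / 2) :=
      Real.exp_le_exp.2 hb2
    have hediff : |Real.exp (-(emgPotential ξ G p φ₁) / 2)
        - Real.exp (-(emgPotential ξ G p φ₂) / 2)| ≤ Real.exp (K / 2) * (B / 2) := by
      refine (aux_exp_lip (K / 2) _ _ hb1 hb2).trans ?_
      refine mul_le_mul_of_nonneg_left ?_ (Real.exp_pos _).le
      have heq : -(emgPotential ξ G p φ₁) / 2 - -(emgPotential ξ G p φ₂) / 2
          = -(emgPotential ξ G p φ₁ - emgPotential ξ G p φ₂) / 2 := by ring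
      rw [heq, abs_div, abs_neg, abs_two]
      gcongr
      exact potdiff p
    calc |Real.sqrt Z₁⁻¹ * Real.exp (-(emgPotential ξ G p φ₁) / 2)
        - Real.sqrt Z₂⁻¹ * Real.exp (-(emgPotential ξ G p φ₂) / 2)|
        ≤ Real.sqrt Z₁⁻¹ * |Real.exp (-(emgPotential ξ G p φ₁) / 2)
            - Real.exp (-(emgPotential ξ G p φ₂) / 2)|
          + |Real.sqrt Z₁⁻¹ - Real.sqrt Z₂⁻¹| * Real.exp (-(emgPotential ξ G p φ₂) / 2) := by
          have hid : Real.sqrt Z₁⁻¹ * Real.exp (-(emgPotential ξ G p φ₁) / 2)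
              - Real.sqrt Z₂⁻¹ * Real.exp (-(emgPotential ξ G p φ₂) / 2)
              = Real.sqrt Z₁⁻¹ * (Real.exp (-(emgPotential ξ G p φ₁) / 2)
                - Real.exp (-(emgPotential ξ G p φ₂) / 2))
              + (Real.sqrt Z₁⁻¹ - Real.sqrt Z₂⁻¹)
                * Real.exp (-(emgPotential ξ G p φ₂) / 2) := by ring
          rw [hid]
          refine (abs_add_le _ _).trans ?_
          rw [abs_mul, abs_mul, abs_of_nonneg hs1nn,
            abs_of_nonneg (Real.exp_pos (-(emgPotential ξ G p φ₂) / 2)).le]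
      _ ≤ Real.exp (K / 2) * (Real.exp (K / 2) * (B / 2))
          + (Real.exp (4 * K) / 2 * B) * Real.exp (K / 2) := by
          gcongr
      _ ≤ Real.exp (5 * K) * B := by
          have q1 : Real.exp (K / 2) * Real.exp (K / 2) = Real.exp K := by
            rw [← Real.exp_add]; norm_num
          have q2 : Real.exp (4 * K) * Real.exp (K / 2) = Real.exp (4 * K + K / 2) :=
            (Real.exp_add _ _).symm
          have e3 : Real.exp K ≤ Real.exp (5 * K) := Real.exp_le_exp.2 (by linarith)
          have e4 : Real.exp (4 * K + K / 2) ≤ Real.exp (5 * K) :=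
            Real.exp_le_exp.2 (by linarith)
          have r1 : Real.exp (K / 2) * (Real.exp (K / 2) * (B / 2))
              = Real.exp K * B / 2 := by linear_combination (B / 2) * q1
          have r2 : Real.exp (4 * K) / 2 * B * Real.exp (K / 2)
              = Real.exp (4 * K + K / 2) * B / 2 := by linear_combination (B / 2) * q2
          rw [r1, r2]
          have := mul_le_mul_of_nonneg_right e3 hB
          have := mul_le_mul_of_nonneg_right e4 hB
          linarith
  -- measurability of the square-root densities
  have hmeasg : ∀ (φ : EuclideanSpace ℝ (Fin M)) (c : ℝ), Measurable
      (fun p => Real.sqrt (c * Real.exp (-(emgPotential ξ G p φ)))) :=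
    fun φ c => Real.continuous_sqrt.measurable.comp ((hmeasΦ φ).neg.exp.const_mul c)
  set g : J → ℝ := fun p =>
    (Real.sqrt (Z₁⁻¹ * Real.exp (-(emgPotential ξ G p φ₁))) -
      Real.sqrt (Z₂⁻¹ * Real.exp (-(emgPotential ξ G p φ₂)))) ^ 2 with hgdef
  have hgint : Integrable g ρ := by
    refine (integrable_const ((Real.exp (5 * K) * B) ^ 2)).mono'
      (((hmeasg φ₁ _).sub (hmeasg φ₂ _)).pow_const 2).aestronglyMeasurable ?_
    filter_upwards with p
    rw [Real.norm_eq_abs, abs_of_nonneg (sq_nonneg _)]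
    have h := abs_le.1 (pointwise p)
    exact sq_le_sq' (by linarith [h.1]) h.2
  have hptsq : ∀ p, g p ≤ (Real.exp (5 * K) * B) ^ 2 := by
    intro p
    have h := abs_le.1 (pointwise p)
    exact sq_le_sq' (by linarith [h.1]) h.2
  have hintle : ∫ p, g p ∂ρ ≤ (Real.exp (5 * K) * B) ^ 2 := by
    have h := integral_mono hgint (integrable_const _) hptsq
    simpa [measure_univ] using h
  have hnn : (0:ℝ) ≤ ∫ p, g p ∂ρ := integral_nonneg fun p => sq_nonneg _
  calc Real.sqrt ((1 / 2) * ∫ p, g p ∂ρ)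
      ≤ Real.sqrt ((Real.exp (5 * K) * B) ^ 2) := Real.sqrt_le_sqrt (by linarith)
    _ = Real.exp (5 * K) * B := Real.sqrt_sq (by positivity)
    _ = Real.exp (5 * K) * C / ξ * Real.sqrt ξ * ((Real.sqrt ξ)⁻¹ * ‖φ₁ - φ₂‖) := by
        have hsξ : Real.sqrt ξ ≠ 0 := (Real.sqrt_pos.2 hξ).ne'
        rw [hBdef]
        field_simp
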